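/- Let q ≥ 1 and let (p_{jkl}) be a finite classical joint probability distribution with marginals p_{jk} = Σ_l p_{jkl}, p_{kl} = Σ_j p_{jkl}, p_k = Σ_{j,l} p_{jkl}. Then the Tsallis entropies satisfy the strong subadditivity inequality S_q(p_{jkl}) + S_q(p_k) ≤ S_q(p_{jk}) + S_q(p_{kl}), where S_q(p) = -Σ p_i ln_q(p_i). -/

import Mathlib

/-- The deformed logarithm (q-logarithm). -/
noncomputable def lnq (q x : ℝ) : ℝ := if q = 1 then Real.log x else (x ^ (q - 1) - 1) / (q - 1)

open Finset Real

lemma rpow_superadd {x y q : ℝ} (hx : 0 ≤ x) (hy : 0 ≤ y) (hq : 1 ≤ q) :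
    x ^ q + y ^ q ≤ (x + y) ^ q := by
  have hq0 : q ≠ 0 := by positivity
  have hfrac : ∀ t : ℝ, 0 ≤ t → t ≤ 1 → t ^ q ≤ t := by
    intro t ht ht1
    rcases ht.eq_or_lt with h | h
    · simp [← h, Real.zero_rpow hq0]
    · calc t ^ q ≤ t ^ (1:ℝ) := Real.rpow_le_rpow_of_exponent_ge h ht1 hq
        _ = t := Real.rpow_one t
  rcases (add_nonneg hx hy).eq_or_lt with hs | hs
  · have hx0 : x = 0 := by linarith
    have hy0 : y = 0 := by linarith
    simp [hx0, hy0, Real.zero_rpow hq0]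
  · set s := x + y with hsdef
    have hxs : x = s * (x / s) := by field_simp
    have hys : y = s * (y / s) := by field_simp
    have h1 : x ^ q = s ^ q * (x / s) ^ q := by
      conv_lhs => rw [hxs]
      rw [Real.mul_rpow hs.le (by positivity)]
    have h2 : y ^ q = s ^ q * (y / s) ^ q := by
      conv_lhs => rw [hys]
      rw [Real.mul_rpow hs.le (by positivity)]
    have h3 : (x / s) ^ q ≤ x / s := hfrac _ (by positivity) (by
      rw [div_le_one hs]; linarith)
    have h4 : (y / s) ^ q ≤ y / s := hfrac _ (by positivity) (by
      rw [div_le_one hs]; linarith)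
    have hsq : (0:ℝ) ≤ s ^ q := by positivity
    have : x ^ q + y ^ q ≤ s ^ q * (x / s + y / s) := by
      rw [h1, h2, mul_add]
      exact add_le_add (mul_le_mul_of_nonneg_left h3 hsq) (mul_le_mul_of_nonneg_left h4 hsq)
    calc x ^ q + y ^ q ≤ s ^ q * (x / s + y / s) := this
      _ = s ^ q := by field_simp; exact hsdef.symm
      _ = (x + y) ^ q := rfl

lemma sum_rpow_le_rpow_sum {ι : Type*} {s : Finset ι} {f : ι → ℝ} {q : ℝ} (hq : 1 ≤ q)
    (hf : ∀ i ∈ s, 0 ≤ f i) : ∑ i ∈ s, f i ^ q ≤ (∑ i ∈ s, f i) ^ q := by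
  have hq0 : q ≠ 0 := by positivity
  induction s using Finset.cons_induction with
  | empty => simp [Real.zero_rpow hq0]
  | cons i s hi ih =>
    rw [Finset.sum_cons, Finset.sum_cons]
    have h1 : ∑ j ∈ s, f j ^ q ≤ (∑ j ∈ s, f j) ^ q :=
      ih (fun j hj => hf j (Finset.mem_cons_of_mem hj))
    have h2 : f i ^ q + (∑ j ∈ s, f j) ^ q ≤ (f i + ∑ j ∈ s, f j) ^ q :=
      rpow_superadd (hf i (Finset.mem_cons_self i s))
        (Finset.sum_nonneg fun j hj => hf j (Finset.mem_cons_of_mem hj)) hq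
    linarith

lemma slice_pow {J L : Type*} [Fintype J] [Fintype L] {q : ℝ} (hq : 1 ≤ q)
    (a : J → L → ℝ) (ha : ∀ j l, 0 ≤ a j l) :
    ∑ j, (∑ l, a j l) ^ q + ∑ l, (∑ j, a j l) ^ q ≤
      (∑ j, ∑ l, a j l) ^ q + ∑ j, ∑ l, (a j l) ^ q := by
  have hq0 : q ≠ 0 := by positivity
  set R : J → ℝ := fun j => ∑ l, a j l with hRdef
  set C : L → ℝ := fun l => ∑ j, a j l with hCdef
  set T : ℝ := ∑ j, R j with hTdef
  have hR : ∀ j, 0 ≤ R j := fun j => Finset.sum_nonneg fun l _ => ha j l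
  have hC : ∀ l, 0 ≤ C l := fun l => Finset.sum_nonneg fun j _ => ha j l
  have hT : 0 ≤ T := Finset.sum_nonneg fun j _ => hR j
  have hRT : ∀ j, R j ≤ T := fun j =>
    Finset.single_le_sum (fun j _ => hR j) (Finset.mem_univ j)
  rcases hT.eq_or_lt with hT0 | hT0
  · -- all entries are zero
    have hall : ∀ j l, a j l = 0 := by
      intro j l
      have hRj0 : R j = 0 := le_antisymm (hT0 ▸ hRT j) (hR j)
      have := (Finset.sum_eq_zero_iff_of_nonneg (fun l _ => ha j l)).1 hRj0
      exact this l (Finset.mem_univ l)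
    simp [hRdef, hCdef, hTdef, hall, Real.zero_rpow hq0]
  · -- T > 0
    set A : J → ℝ := fun j => ∑ l, (a j l) ^ q with hAdef
    have hA0 : ∀ j, 0 ≤ A j := fun j =>
      Finset.sum_nonneg fun l _ => Real.rpow_nonneg (ha j l) q
    have hAle : ∀ j, A j ≤ (R j) ^ q := fun j =>
      sum_rpow_le_rpow_sum hq (fun l _ => ha j l)
    have haR : ∀ j l, R j = 0 → a j l = 0 := by
      intro j l h
      have := (Finset.sum_eq_zero_iff_of_nonneg (fun l _ => ha j l)).1 h
      exact this l (Finset.mem_univ l)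
    -- Jensen per column
    have jensen : ∀ l, (C l / T) ^ q ≤ ∑ j, (R j / T) * ((a j l) / (R j)) ^ q := by
      intro l
      have hw0 : ∀ j ∈ (Finset.univ : Finset J), 0 ≤ R j / T :=
        fun j _ => div_nonneg (hR j) hT
      have hw1 : ∑ j, R j / T = 1 := by
        rw [← Finset.sum_div, ← hTdef, div_self hT0.ne']
      have hmem : ∀ j ∈ (Finset.univ : Finset J), a j l / R j ∈ Set.Ici (0:ℝ) :=
        fun j _ => Set.mem_Ici.2 (div_nonneg (ha j l) (hR j))
      have hj := (convexOn_rpow hq).map_sum_le hw0 hw1 hmem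
      simp only [smul_eq_mul] at hj
      have hx : ∑ j, (R j / T) * (a j l / R j) = C l / T := by
        rw [hCdef]
        simp only
        rw [Finset.sum_div]
        refine Finset.sum_congr rfl fun j _ => ?_
        rcases (hR j).eq_or_lt with h0 | h0
        · rw [haR j l h0.symm, ← h0]; simp
        · field_simp
      rw [hx] at hj
      exact hj
    -- rewrite column powers
    have hcol : ∀ l, (C l) ^ q = T ^ q * (C l / T) ^ q := by
      intro l
      rw [Real.div_rpow (hC l) hT, mul_comm, div_mul_cancel₀]
      exact (Real.rpow_pos_of_pos hT0 q).ne'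
    have hrowsum : ∀ j, ∑ l, ((a j l) / (R j)) ^ q = A j / (R j) ^ q := by
      intro j
      rw [hAdef]
      simp only
      rw [Finset.sum_div]
      exact Finset.sum_congr rfl fun l _ => Real.div_rpow (ha j l) (hR j) q
    have hcolsum : ∑ l, (C l) ^ q ≤ ∑ j, T ^ q * ((R j / T) * (A j / (R j) ^ q)) := by
      calc ∑ l, (C l) ^ q = ∑ l, T ^ q * (C l / T) ^ q := Finset.sum_congr rfl fun l _ => hcol l
        _ ≤ ∑ l, T ^ q * (∑ j, (R j / T) * ((a j l) / (R j)) ^ q) := by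
            refine Finset.sum_le_sum fun l _ => ?_
            exact mul_le_mul_of_nonneg_left (jensen l) (Real.rpow_nonneg hT q)
        _ = ∑ l, ∑ j, T ^ q * ((R j / T) * ((a j l) / (R j)) ^ q) := by
            exact Finset.sum_congr rfl fun l _ => Finset.mul_sum _ _ _
        _ = ∑ j, ∑ l, T ^ q * ((R j / T) * ((a j l) / (R j)) ^ q) := Finset.sum_comm
        _ = ∑ j, T ^ q * ((R j / T) * (∑ l, ((a j l) / (R j)) ^ q)) := by
            simp only [Finset.mul_sum]
        _ = ∑ j, T ^ q * ((R j / T) * (A j / (R j) ^ q)) := by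
            exact Finset.sum_congr rfl fun j _ => by rw [hrowsum j]
    -- per-row estimate
    have hper : ∀ j, (R j) ^ q + T ^ q * ((R j / T) * (A j / (R j) ^ q)) ≤
        T ^ q * (R j / T) + A j := by
      intro j
      rcases (hR j).eq_or_lt with h0 | h0
      · rw [← h0]
        simpa [Real.zero_rpow hq0] using hA0 j
      · set u : ℝ := (R j) ^ q with hu
        have hu0 : 0 < u := Real.rpow_pos_of_pos h0 q
        set m : ℝ := T ^ q * (R j / T) with hm
        have hum : u ≤ m := by
          have h1 : R j ^ q = R j ^ (q - 1) * R j := by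
            rw [← Real.rpow_add_one h0.ne']
            norm_num
          have h2 : m = T ^ (q - 1) * R j := by
            rw [hm]
            have : T ^ q = T ^ (q - 1) * T := by
              rw [← Real.rpow_add_one hT0.ne']
              norm_num
            rw [this]
            field_simp
          rw [hu, h1, h2]
          exact mul_le_mul_of_nonneg_right
            (Real.rpow_le_rpow (hR j) (hRT j) (by linarith)) (hR j)
        have hAu : A j ≤ u := hAle j
        have hkey : 0 ≤ (m - u) * (u - A j) :=
          mul_nonneg (by linarith) (by linarith)
        have h4 : m * A j / u ≤ m + A j - u := by
          rw [div_le_iff₀ hu0]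
          nlinarith [hkey]
        have h5 : T ^ q * (R j / T * (A j / u)) = m * A j / u := by rw [hm]; ring
        rw [h5]
        linarith
    calc ∑ j, (R j) ^ q + ∑ l, (C l) ^ q
        ≤ ∑ j, (R j) ^ q + ∑ j, T ^ q * ((R j / T) * (A j / (R j) ^ q)) := by
          linarith [hcolsum]
      _ = ∑ j, ((R j) ^ q + T ^ q * ((R j / T) * (A j / (R j) ^ q))) :=
          Finset.sum_add_distrib.symm
      _ ≤ ∑ j, (T ^ q * (R j / T) + A j) := Finset.sum_le_sum fun j _ => hper j
      _ = T ^ q + ∑ j, A j := by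
          rw [Finset.sum_add_distrib, ← Finset.mul_sum, ← Finset.sum_div, ← hTdef,
            div_self hT0.ne', mul_one]

lemma slice_log {J L : Type*} [Fintype J] [Fintype L]
    (a : J → L → ℝ) (ha : ∀ j l, 0 ≤ a j l) :
    ∑ j, (∑ l, a j l) * Real.log (∑ l, a j l) +
      ∑ l, (∑ j, a j l) * Real.log (∑ j, a j l) ≤
    ∑ j, ∑ l, a j l * Real.log (a j l) +
      (∑ j, ∑ l, a j l) * Real.log (∑ j, ∑ l, a j l) := by
  set R : J → ℝ := fun j => ∑ l, a j l with hRdef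
  set C : L → ℝ := fun l => ∑ j, a j l with hCdef
  set T : ℝ := ∑ j, R j with hTdef
  have hR : ∀ j, 0 ≤ R j := fun j => Finset.sum_nonneg fun l _ => ha j l
  have hC : ∀ l, 0 ≤ C l := fun l => Finset.sum_nonneg fun j _ => ha j l
  have hT : 0 ≤ T := Finset.sum_nonneg fun j _ => hR j
  have haR : ∀ j l, a j l ≤ R j := fun j l =>
    Finset.single_le_sum (fun l _ => ha j l) (Finset.mem_univ l)
  have haC : ∀ j l, a j l ≤ C l := fun j l =>
    Finset.single_le_sum (fun j _ => ha j l) (Finset.mem_univ j)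
  have hCT : ∑ l, C l = T := by
    rw [hTdef, hCdef, hRdef]
    exact Finset.sum_comm
  rcases hT.eq_or_lt with hT0 | hT0
  · have hall : ∀ j l, a j l = 0 := by
      intro j l
      have hRT : R j ≤ T := Finset.single_le_sum (fun j _ => hR j) (Finset.mem_univ j)
      have hRj0 : R j = 0 := le_antisymm (hT0 ▸ hRT) (hR j)
      have := (Finset.sum_eq_zero_iff_of_nonneg (fun l _ => ha j l)).1 hRj0
      exact this l (Finset.mem_univ l)
    simp [hRdef, hCdef, hTdef, hall]
  · set b : J → L → ℝ := fun j l => R j * C l / T with hbdef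
    have hb0 : ∀ j l, 0 ≤ b j l := fun j l =>
      div_nonneg (mul_nonneg (hR j) (hC l)) hT
    have hzero : ∀ j l, b j l = 0 → a j l = 0 := by
      intro j l h
      rw [hbdef] at h
      simp only [div_eq_zero_iff] at h
      rcases h with h | h
      · rcases mul_eq_zero.1 h with h | h
        · exact le_antisymm (h ▸ haR j l) (ha j l)
        · exact le_antisymm (h ▸ haC j l) (ha j l)
      · exact absurd h hT0.ne'
    have hbsum : ∑ j, ∑ l, b j l = T := by
      rw [hbdef]
      simp only
      have : ∀ j, ∑ l, R j * C l / T = R j * (∑ l, C l) / T := by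
        intro j
        rw [Finset.mul_sum, Finset.sum_div]
      rw [Finset.sum_congr rfl fun j _ => this j]
      rw [hCT, ← Finset.sum_div, ← Finset.sum_mul, ← hTdef]
      field_simp
    -- Jensen for x * log x over the product type
    have hw0 : ∀ p ∈ (Finset.univ : Finset (J × L)), 0 ≤ b p.1 p.2 / T :=
      fun p _ => div_nonneg (hb0 p.1 p.2) hT
    have hw1 : ∑ p : J × L, b p.1 p.2 / T = 1 := by
      rw [← Finset.sum_div, Fintype.sum_prod_type, hbsum, div_self hT0.ne']
    have hmem : ∀ p ∈ (Finset.univ : Finset (J × L)),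
        a p.1 p.2 / b p.1 p.2 ∈ Set.Ici (0:ℝ) :=
      fun p _ => Set.mem_Ici.2 (div_nonneg (ha p.1 p.2) (hb0 p.1 p.2))
    have hj := (Real.convexOn_mul_log).map_sum_le hw0 hw1 hmem
    simp only [smul_eq_mul] at hj
    have hxs : ∑ p : J × L, b p.1 p.2 / T * (a p.1 p.2 / b p.1 p.2) = 1 := by
      have : ∀ p : J × L, b p.1 p.2 / T * (a p.1 p.2 / b p.1 p.2) = a p.1 p.2 / T := by
        intro p
        rcases (hb0 p.1 p.2).eq_or_lt with h0 | h0
        · rw [hzero p.1 p.2 h0.symm, ← h0]; simp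
        · field_simp
      rw [Finset.sum_congr rfl fun p _ => this p, ← Finset.sum_div,
        Fintype.sum_prod_type]
      rw [show ∑ j, ∑ l, a j l = T from rfl]
      exact div_self hT0.ne'
    rw [hxs] at hj
    simp only [Real.log_one, mul_zero] at hj
    have hterm : ∀ p : J × L,
        b p.1 p.2 / T * (a p.1 p.2 / b p.1 p.2 * Real.log (a p.1 p.2 / b p.1 p.2)) =
        a p.1 p.2 * Real.log (a p.1 p.2 / b p.1 p.2) / T := by
      intro p
      rcases (hb0 p.1 p.2).eq_or_lt with h0 | h0
      · rw [hzero p.1 p.2 h0.symm, ← h0]; simp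
      · field_simp
    rw [Finset.sum_congr rfl fun p _ => hterm p, ← Finset.sum_div] at hj
    have hmain : 0 ≤ ∑ p : J × L, a p.1 p.2 * Real.log (a p.1 p.2 / b p.1 p.2) := by
      by_contra hcon
      push_neg at hcon
      have : (∑ p : J × L, a p.1 p.2 * Real.log (a p.1 p.2 / b p.1 p.2)) / T < 0 :=
        div_neg_of_neg_of_pos hcon hT0
      linarith
    -- expand the logarithm
    have hexp : ∀ j l, a j l * Real.log (a j l / b j l) =
        a j l * Real.log (a j l) - a j l * Real.log (R j) - a j l * Real.log (C l)
          + a j l * Real.log T := by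
      intro j l
      rcases (ha j l).eq_or_lt with h0 | h0
      · rw [← h0]; ring
      · have hRj : 0 < R j := lt_of_lt_of_le h0 (haR j l)
        have hCl : 0 < C l := lt_of_lt_of_le h0 (haC j l)
        have hb : b j l = R j * C l / T := rfl
        rw [Real.log_div h0.ne' (by rw [hb]; positivity), hb,
          Real.log_div (by positivity) hT0.ne', Real.log_mul hRj.ne' hCl.ne']
        ring
    have hsplit : ∑ p : J × L, a p.1 p.2 * Real.log (a p.1 p.2 / b p.1 p.2) =
        (∑ j, ∑ l, a j l * Real.log (a j l)) - (∑ j, R j * Real.log (R j))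
          - (∑ l, C l * Real.log (C l)) + T * Real.log T := by
      rw [Fintype.sum_prod_type]
      simp only
      rw [Finset.sum_congr rfl fun j _ => Finset.sum_congr rfl fun l _ => hexp j l]
      have e1 : ∀ j, ∑ l, (a j l * Real.log (a j l) - a j l * Real.log (R j)
          - a j l * Real.log (C l) + a j l * Real.log T) =
          (∑ l, a j l * Real.log (a j l)) - R j * Real.log (R j)
            - (∑ l, a j l * Real.log (C l)) + R j * Real.log T := by
        intro j
        rw [Finset.sum_add_distrib, Finset.sum_sub_distrib, Finset.sum_sub_distrib,
          ← Finset.sum_mul, ← Finset.sum_mul]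
      rw [Finset.sum_congr rfl fun j _ => e1 j]
      rw [Finset.sum_add_distrib, Finset.sum_sub_distrib, Finset.sum_sub_distrib]
      have e2 : ∑ j, ∑ l, a j l * Real.log (C l) = ∑ l, C l * Real.log (C l) := by
        rw [Finset.sum_comm]
        exact Finset.sum_congr rfl fun l _ => by
          rw [← Finset.sum_mul, hCdef]
      have e3 : ∑ j, R j * Real.log T = T * Real.log T := by
        rw [← Finset.sum_mul, ← hTdef]
      rw [e2, e3]
    rw [hsplit] at hmain
    linarith

lemma mul_lnq {q x : ℝ} (hq : 1 < q) (hx : 0 ≤ x) :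
    x * lnq q x = (x ^ q - x) / (q - 1) := by
  have hq0 : q ≠ 0 := (lt_trans zero_lt_one hq).ne'
  rw [lnq, if_neg hq.ne']
  rcases hx.eq_or_lt with h0 | h0
  · rw [← h0]
    simp [Real.zero_rpow hq0]
  · have h1 : (1:ℝ) + (q - 1) = q := by ring
    have hxq : x ^ q = x * x ^ (q - 1) := by
      conv_lhs => rw [← h1]
      rw [Real.rpow_add h0, Real.rpow_one]
    rw [hxq]
    ring

lemma slice_lnq {J L : Type*} [Fintype J] [Fintype L] {q : ℝ} (hq : 1 ≤ q)
    (a : J → L → ℝ) (ha : ∀ j l, 0 ≤ a j l) :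
    ∑ j, (∑ l, a j l) * lnq q (∑ l, a j l) + ∑ l, (∑ j, a j l) * lnq q (∑ j, a j l) ≤
    ∑ j, ∑ l, a j l * lnq q (a j l) +
      (∑ j, ∑ l, a j l) * lnq q (∑ j, ∑ l, a j l) := by
  have hR : ∀ j, 0 ≤ ∑ l, a j l := fun j => Finset.sum_nonneg fun l _ => ha j l
  have hC : ∀ l, 0 ≤ ∑ j, a j l := fun l => Finset.sum_nonneg fun j _ => ha j l
  have hT : 0 ≤ ∑ j, ∑ l, a j l := Finset.sum_nonneg fun j _ => hR j
  rcases eq_or_lt_of_le hq with hq1 | hq1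
  · -- q = 1 : Shannon case
    subst hq1
    simp only [lnq, if_pos rfl]
    exact slice_log a ha
  · -- q > 1 : power case
    have hq10 : 0 < q - 1 := by linarith
    have h1 : ∑ j, (∑ l, a j l) * lnq q (∑ l, a j l)
        = ∑ j, ((∑ l, a j l) ^ q - (∑ l, a j l)) / (q - 1) :=
      Finset.sum_congr rfl fun j _ => mul_lnq hq1 (hR j)
    have h2 : ∑ l, (∑ j, a j l) * lnq q (∑ j, a j l)
        = ∑ l, ((∑ j, a j l) ^ q - (∑ j, a j l)) / (q - 1) :=
      Finset.sum_congr rfl fun l _ => mul_lnq hq1 (hC l)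
    have h3 : ∑ j, ∑ l, a j l * lnq q (a j l)
        = ∑ j, ∑ l, ((a j l) ^ q - a j l) / (q - 1) :=
      Finset.sum_congr rfl fun j _ => Finset.sum_congr rfl fun l _ =>
        mul_lnq hq1 (ha j l)
    have h4 : (∑ j, ∑ l, a j l) * lnq q (∑ j, ∑ l, a j l)
        = ((∑ j, ∑ l, a j l) ^ q - (∑ j, ∑ l, a j l)) / (q - 1) := mul_lnq hq1 hT
    rw [h1, h2, h3, h4]
    simp only [← Finset.sum_div, ← add_div]
    rw [div_le_div_iff_of_pos_right hq10]
    simp only [Finset.sum_sub_distrib]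
    have hcomm : ∑ l, ∑ j, a j l = ∑ j, ∑ l, a j l := Finset.sum_comm
    linarith [slice_pow hq a ha, hcomm]

/-- Strong subadditivity of the classical Tsallis entropy for `q ≥ 1`. -/
theorem tsallis_classical_ssa (q : ℝ) (hq : 1 ≤ q)
    {J K L : Type*} [Fintype J] [Fintype K] [Fintype L]
    (p : J → K → L → ℝ) (hp : ∀ j k l, 0 ≤ p j k l)
    (hsum : ∑ j, ∑ k, ∑ l, p j k l = 1) :
    (-∑ j, ∑ k, ∑ l, p j k l * lnq q (p j k l)) +
      (-∑ k, (∑ j, ∑ l, p j k l) * lnq q (∑ j, ∑ l, p j k l)) ≤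
    (-∑ j, ∑ k, (∑ l, p j k l) * lnq q (∑ l, p j k l)) +
      (-∑ k, ∑ l, (∑ j, p j k l) * lnq q (∑ j, p j k l)) := by
  have key : ∀ k : K, ∑ j, (∑ l, p j k l) * lnq q (∑ l, p j k l)
      + ∑ l, (∑ j, p j k l) * lnq q (∑ j, p j k l) ≤
      ∑ j, ∑ l, p j k l * lnq q (p j k l)
      + (∑ j, ∑ l, p j k l) * lnq q (∑ j, ∑ l, p j k l) := fun k =>
    slice_lnq hq (fun j l => p j k l) (fun j l => hp j k l)
  have hsumk := Finset.sum_le_sum (fun k (_ : k ∈ (Finset.univ : Finset K)) => key k)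
  rw [Finset.sum_add_distrib, Finset.sum_add_distrib] at hsumk
  have c1 : ∑ j, ∑ k, ∑ l, p j k l * lnq q (p j k l)
      = ∑ k, ∑ j, ∑ l, p j k l * lnq q (p j k l) := Finset.sum_comm
  have c3 : ∑ j, ∑ k, (∑ l, p j k l) * lnq q (∑ l, p j k l)
      = ∑ k, ∑ j, (∑ l, p j k l) * lnq q (∑ l, p j k l) := Finset.sum_comm
  linarith [hsumk, c1, c3]
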